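/- Consider a single arc as in the context, and assume in addition that there is ν⁺ ≥ ε with f⁺(θ) ≤ ν⁺ for all θ, so that q is Lipschitz continuous and hence differentiable almost everywhere. Then for almost all θ ≥ 0: q'(θ) = f⁺(θ)/f⁻(T(θ)) − 1 if f⁻(T(θ)) > 0; q'(θ) = −1 if f⁻(T(θ)) = 0 and z(θ + τ) > 0; and q'(θ) = 0 if f⁻(T(θ)) = 0 and z(θ + τ) = 0. -/

import Mathlib

open MeasureTheory
open scoped Classical

noncomputable section

/-- Cumulative flow `F(θ) = ∫₀^θ f` (which vanishes for `θ < 0` whenever `f`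
vanishes on negatives). -/
def Fcum (f : ℝ → ℝ) (θ : ℝ) : ℝ := ∫ ξ in (0:ℝ)..θ, f ξ

/-- The queue `z(θ) = F⁺(θ − τ) − F⁻(θ)`. -/
def queueLen (τ : ℝ) (fplus fminus : ℝ → ℝ) (θ : ℝ) : ℝ :=
  Fcum fplus (θ - τ) - Fcum fminus θ

/-- A single arc of a feasible flow over time: transit time `τ ≥ 0`, outflow
capacity `ν > 0`, inflow rate `fplus` and outflow rate `fminus` (locally integrable,
bounded, nonnegative, vanishing on negative times) with `fminus ≤ ν`, nonnegative
queues, and a lower bound `ε > 0` for the outflow rate whenever the queue is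
positive (so that the waiting time is well-defined). -/
structure Arc where
  τ : ℝ
  ν : ℝ
  ε : ℝ
  fplus : ℝ → ℝ
  fminus : ℝ → ℝ
  τ_nonneg : 0 ≤ τ
  ν_pos : 0 < ν
  ε_pos : 0 < ε
  fplus_nonneg : ∀ θ, 0 ≤ fplus θ
  fminus_nonneg : ∀ θ, 0 ≤ fminus θ
  fplus_zero_neg : ∀ θ, θ < 0 → fplus θ = 0
  fminus_zero_neg : ∀ θ, θ < 0 → fminus θ = 0
  fplus_bdd : ∃ M, ∀ θ, fplus θ ≤ M
  fplus_li : LocallyIntegrable fplus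
  fminus_li : LocallyIntegrable fminus
  fminus_le_cap : ∀ θ, fminus θ ≤ ν
  queue_nonneg : ∀ θ, 0 ≤ θ → 0 ≤ queueLen τ fplus fminus θ
  outflow_lb : ∀ θ, 0 < queueLen τ fplus fminus θ → ε ≤ fminus θ

namespace Arc

/-- Cumulative inflow `F⁺`. -/
def Fplus (A : Arc) (θ : ℝ) : ℝ := Fcum A.fplus θ

/-- Cumulative outflow `F⁻`. -/
def Fminus (A : Arc) (θ : ℝ) : ℝ := Fcum A.fminus θ

/-- The queue `z`. -/
def z (A : Arc) (θ : ℝ) : ℝ := queueLen A.τ A.fplus A.fminus θ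

/-- The waiting time `q(θ)`. -/
def q (A : Arc) (θ : ℝ) : ℝ :=
  sInf {q : ℝ | 0 ≤ q ∧
    (∫ ξ in (θ + A.τ)..(θ + A.τ + q), A.fminus ξ) = A.z (θ + A.τ)}

/-- The exit time `T(θ) = θ + τ + q(θ)`. -/
def T (A : Arc) (θ : ℝ) : ℝ := θ + A.τ + A.q θ

end Arc

end


open Set Filter
open scoped Topology

namespace Aux

variable {f : ℝ → ℝ}

lemma ii (hf : LocallyIntegrable f) (a b : ℝ) : IntervalIntegrable f volume a b :=
  (hf.integrableOn_isCompact isCompact_uIcc).intervalIntegrable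

lemma Fcum_sub (hf : LocallyIntegrable f) (a b : ℝ) :
    Fcum f b - Fcum f a = ∫ x in a..b, f x := by
  have h := intervalIntegral.integral_add_adjacent_intervals (ii hf 0 a) (ii hf a b)
  unfold Fcum
  linarith

lemma Fcum_mono (hf : LocallyIntegrable f) (h0 : ∀ x, 0 ≤ f x) : Monotone (Fcum f) := by
  intro a b hab
  have h := Fcum_sub hf a b
  have : 0 ≤ ∫ x in a..b, f x := intervalIntegral.integral_nonneg hab (fun u _ => h0 u)
  linarith

lemma Fcum_le (hf : LocallyIntegrable f) {M : ℝ} (hM : ∀ x, f x ≤ M) {a b : ℝ} (hab : a ≤ b) :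
    Fcum f b - Fcum f a ≤ M * (b - a) := by
  rw [Fcum_sub hf a b]
  calc (∫ x in a..b, f x) ≤ ∫ _x in a..b, M := by
        apply intervalIntegral.integral_mono_on hab (ii hf a b) intervalIntegrable_const
        exact fun u _ => hM u
    _ = M * (b - a) := by simp [mul_comm]

lemma Fcum_lipschitz (hf : LocallyIntegrable f) (h0 : ∀ x, 0 ≤ f x) {M : ℝ}
    (hM : ∀ x, f x ≤ M) : LipschitzWith (Real.toNNReal M) (Fcum f) := by
  have hM0 : 0 ≤ M := le_trans (h0 0) (hM 0)
  apply LipschitzWith.of_dist_le_mul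
  intro a b
  rw [Real.dist_eq, Real.dist_eq, Real.coe_toNNReal _ hM0]
  rcases le_total a b with h | h
  · rw [abs_of_nonpos (by linarith [Fcum_mono hf h0 h] : Fcum f a - Fcum f b ≤ 0),
      abs_of_nonpos (by linarith)]
    have := Fcum_le hf hM h
    nlinarith
  · rw [abs_of_nonneg (by linarith [Fcum_mono hf h0 h] : 0 ≤ Fcum f a - Fcum f b),
      abs_of_nonneg (by linarith)]
    have := Fcum_le hf hM h
    nlinarith

lemma Fcum_continuous (hf : LocallyIntegrable f) : Continuous (Fcum f) :=
  intervalIntegral.continuous_primitive (ii hf) 0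

lemma Fcum_of_nonpos (hf : LocallyIntegrable f) (hneg : ∀ x, x < 0 → f x = 0) {a : ℝ}
    (ha : a ≤ 0) : Fcum f a = 0 := by
  unfold Fcum
  rw [intervalIntegral.integral_symm, intervalIntegral.integral_of_le ha]
  have : ∀ᵐ x ∂(volume.restrict (Ioc a 0)), f x = 0 := by
    filter_upwards [ae_restrict_mem measurableSet_Ioc, compl_mem_ae_iff.2 (measure_singleton (0:ℝ))]
      with x hx hx0
    exact hneg x (lt_of_le_of_ne hx.2 hx0)
  rw [MeasureTheory.integral_congr_ae this, integral_zero, neg_zero]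

end Aux

namespace Aux

lemma ftc_ae {f : ℝ → ℝ} (hf : LocallyIntegrable f) (h0 : ∀ x, 0 ≤ f x) :
    ∀ᵐ x ∂(volume : Measure ℝ), HasDerivAt (Fcum f) (f x) x := by
  have hmono := Fcum_mono hf h0
  have hcont := Fcum_continuous hf
  set S : StieltjesFunction ℝ := ⟨Fcum f, hmono, fun x => hcont.continuousWithinAt⟩ with hS
  have hSm : S.measure = volume.withDensity (fun x => ENNReal.ofReal (f x)) := by
    refine Measure.ext_of_Ioc _ _ (fun a b hab => ?_)
    rw [S.measure_Ioc, withDensity_apply _ measurableSet_Ioc]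
    have h2 : Fcum f b - Fcum f a = ∫ x in Set.Ioc a b, f x := by
      rw [Fcum_sub hf a b, intervalIntegral.integral_of_le hab.le]
    show ENNReal.ofReal (Fcum f b - Fcum f a) = _
    rw [h2, ofReal_integral_eq_lintegral_ofReal]
    · exact (hf.integrableOn_isCompact isCompact_Icc).mono_set Set.Ioc_subset_Icc_self
    · exact Eventually.of_forall (fun x => h0 x)
  have h1 : (volume.withDensity (fun x => ENNReal.ofReal (f x))).rnDeriv volume
      =ᵐ[volume] fun x => ENNReal.ofReal (f x) :=
    Measure.rnDeriv_withDensity₀ volume hf.aestronglyMeasurable.aemeasurable.ennreal_ofReal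
  rw [← hSm] at h1
  filter_upwards [S.ae_hasDerivAt, h1] with x hx h1x
  rw [h1x] at hx
  rwa [ENNReal.toReal_ofReal (h0 x)] at hx

end Aux

namespace Aux

lemma sard {T : ℝ → ℝ} (hcont : Continuous T) (hmono : MonotoneOn T (Ici 0)) {N : Set ℝ}
    (hN : volume N = 0) :
    ∀ᵐ θ ∂(volume : Measure ℝ), 0 < θ → DifferentiableAt ℝ T θ → T θ ∈ N → deriv T θ = 0 := by
  set N' := toMeasurable volume N with hN'def
  have hN' : volume N' = 0 := by rwa [measure_toMeasurable]
  set s : ℕ → Set ℝ := fun n =>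
    {θ | 0 < θ ∧ DifferentiableAt ℝ T θ ∧ T θ ∈ N' ∧ ((n : ℝ) + 1)⁻¹ ≤ |deriv T θ|} with hsdef
  have hmeas : ∀ n, MeasurableSet (s n) := by
    intro n
    have : s n = (Ioi 0 ∩ {θ | DifferentiableAt ℝ T θ}) ∩
        (T ⁻¹' N' ∩ (fun θ => |deriv T θ|) ⁻¹' Ici ((n:ℝ)+1)⁻¹) := by
      ext θ
      constructor
      · rintro ⟨a, b, c, d⟩; exact ⟨⟨a, b⟩, c, d⟩
      · rintro ⟨⟨a, b⟩, c, d⟩; exact ⟨a, b, c, d⟩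
    rw [this]
    exact (measurableSet_Ioi.inter (measurableSet_of_differentiableAt ℝ T)).inter
      ((hcont.measurable (measurableSet_toMeasurable _ _)).inter
      (((measurable_deriv T).abs) measurableSet_Ici))
  have hderiv0 : ∀ n, ∀ x ∈ s n, ∀ y ∈ s n, x < y → T x ≠ T y := by
    intro n x hx y hy hxy heq
    have hconst : ∀ u ∈ Icc x y, T u = T x := by
      intro u hu
      refine le_antisymm ?_ ?_
      · rw [heq]
        exact hmono (le_of_lt (lt_of_lt_of_le hx.1 hu.1)) (le_of_lt (lt_of_lt_of_le hx.1 hxy.le)) hu.2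
      · exact hmono hx.1.le (le_of_lt (lt_of_lt_of_le hx.1 hu.1)) hu.1
    have hIcc : Icc x y ∈ 𝓝[Icc x y] x := self_mem_nhdsWithin
    have hud : UniqueDiffWithinAt ℝ (Icc x y) x := uniqueDiffOn_Icc hxy x ⟨le_refl x, hxy.le⟩
    have h1 : HasDerivWithinAt T (deriv T x) (Icc x y) x :=
      hx.2.1.hasDerivAt.hasDerivWithinAt
    have h2 : HasDerivWithinAt T 0 (Icc x y) x :=
      (hasDerivWithinAt_const x (Icc x y) (T x)).congr hconst (hconst x ⟨le_refl x, hxy.le⟩)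
    have := h1.derivWithin hud
    rw [h2.derivWithin hud] at this
    have h3 := hx.2.2.2
    rw [← this] at h3
    simp at h3
    have : (0:ℝ) < ((n:ℝ)+1)⁻¹ := by positivity
    linarith
  have hinj : ∀ n, InjOn T (s n) := by
    intro n x hx y hy heq
    by_contra hne
    rcases lt_or_gt_of_ne hne with h | h
    · exact hderiv0 n x hx y hy h heq
    · exact hderiv0 n y hy x hx h heq.symm
  have key : ∀ n, volume (s n) = 0 := by
    intro n
    have himg : volume (T '' s n) = 0 :=
      measure_mono_null (image_subset_iff.2 (fun x hx => hx.2.2.1)) hN'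
    have hle := MeasureTheory.lintegral_abs_det_fderiv_le_addHaar_image volume (hmeas n)
      (f' := fun x => (1 : ℝ →L[ℝ] ℝ).smulRight (deriv T x))
      (fun x hx => (hx.2.1.hasDerivAt.hasFDerivAt).hasFDerivWithinAt) (hinj n)
    simp only [ContinuousLinearMap.smulRight_one_eq_toSpanSingleton, ContinuousLinearMap.det_toSpanSingleton] at hle
    rw [himg] at hle
    have hlow : ENNReal.ofReal (((n:ℝ)+1)⁻¹) * volume (s n)
        ≤ ∫⁻ x in s n, ENNReal.ofReal |deriv T x| ∂volume := by
      rw [← MeasureTheory.setLIntegral_const]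
      apply MeasureTheory.lintegral_mono_ae
      filter_upwards [ae_restrict_mem (hmeas n)] with x hx
      exact ENNReal.ofReal_le_ofReal hx.2.2.2
    have h0 : ENNReal.ofReal (((n:ℝ)+1)⁻¹) * volume (s n) = 0 :=
      le_antisymm (hlow.trans hle) (by positivity)
    have hc : ENNReal.ofReal (((n:ℝ)+1)⁻¹) ≠ 0 := by
      simp [ENNReal.ofReal_eq_zero]
      positivity
    exact (mul_eq_zero.1 h0).resolve_left hc
  rw [MeasureTheory.ae_iff]
  refine measure_mono_null ?_ (measure_iUnion_null key)
  intro θ hθ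
  push_neg at hθ
  obtain ⟨h1, h2, h3, h4⟩ := hθ
  have habs : 0 < |deriv T θ| := abs_pos.2 h4
  obtain ⟨n, hn⟩ := exists_nat_gt (|deriv T θ|)⁻¹
  refine mem_iUnion.2 ⟨n, h1, h2, subset_toMeasurable _ _ h3, ?_⟩
  have hn1 : (|deriv T θ|)⁻¹ < (n:ℝ) + 1 := hn.trans (by linarith)
  calc ((n:ℝ)+1)⁻¹ ≤ ((|deriv T θ|)⁻¹)⁻¹ := by
        apply inv_anti₀ (by positivity) hn1.le
    _ = |deriv T θ| := inv_inv _

end Aux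

namespace Aux

lemma lipschitz_comp_zero {g f : ℝ → ℝ} {K : NNReal} (hg : LipschitzWith K g) {x : ℝ}
    (hf : HasDerivAt f 0 x) : HasDerivAt (fun y => g (f y)) 0 x := by
  rw [hasDerivAt_iff_isLittleO] at hf ⊢
  simp only [smul_zero, sub_zero] at hf ⊢
  have hb : (fun y => g (f y) - g (f x)) =O[𝓝 x] (fun y => f y - f x) := by
    apply Asymptotics.IsBigO.of_bound (K : ℝ)
    apply Eventually.of_forall
    intro y
    have := hg.dist_le_mul (f y) (f x)
    simpa [Real.dist_eq, Real.norm_eq_abs] using this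
  exact hb.trans_isLittleO hf

lemma Fcum_nonneg {f : ℝ → ℝ} (hf : LocallyIntegrable f) (h0 : ∀ x, 0 ≤ f x)
    (hneg : ∀ x, x < 0 → f x = 0) (t : ℝ) : 0 ≤ Fcum f t := by
  rcases le_total t 0 with h | h
  · rw [Fcum_of_nonpos hf hneg h]
  · have := Fcum_mono hf h0 h
    rwa [Fcum_of_nonpos hf hneg (le_refl 0)] at this

end Aux


section ArcLemmas

open Aux

variable (A : Arc)

/-- The feasibility set whose infimum is `q θ`. -/
def Arc.Sset (θ : ℝ) : Set ℝ :=
  {s : ℝ | 0 ≤ s ∧ Fcum A.fminus (θ + A.τ + s) = Fcum A.fplus θ}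

lemma Arc.z_eq (θ : ℝ) :
    A.z (θ + A.τ) = Fcum A.fplus θ - Fcum A.fminus (θ + A.τ) := by
  show queueLen A.τ A.fplus A.fminus (θ + A.τ) = _
  unfold queueLen
  have h : θ + A.τ - A.τ = θ := by ring
  rw [h]

lemma Arc.q_def' (θ : ℝ) : A.q θ = sInf (A.Sset θ) := by
  unfold Arc.q
  congr 1
  ext s
  have h := Aux.Fcum_sub A.fminus_li (θ + A.τ) (θ + A.τ + s)
  rw [A.z_eq θ]
  constructor
  · rintro ⟨h1, h2⟩
    exact ⟨h1, by linarith⟩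
  · rintro ⟨h1, h2⟩
    have h2' : Fcum A.fminus (θ + A.τ + s) = Fcum A.fplus θ := h2
    exact ⟨h1, by linarith⟩

lemma Arc.q_nonneg (θ : ℝ) : 0 ≤ A.q θ := by
  rw [A.q_def']
  exact Real.sInf_nonneg (fun s hs => hs.1)

lemma Arc.q_min (θ : ℝ) {s : ℝ} (hs : 0 ≤ s)
    (hval : Fcum A.fminus (θ + A.τ + s) = Fcum A.fplus θ) : A.q θ ≤ s := by
  rw [A.q_def']
  exact csInf_le ⟨0, fun u hu => hu.1⟩ ⟨hs, hval⟩

lemma Arc.Sset_nonempty (θ : ℝ) (hz : 0 ≤ A.z (θ + A.τ)) : (A.Sset θ).Nonempty := by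
  have hzeq := A.z_eq θ
  set z := A.z (θ + A.τ) with hzdef
  set s₀ : ℝ := z / A.ε + 1 with hs₀
  have hε := A.ε_pos
  have hs₀pos : 0 < s₀ := by positivity
  have key : Fcum A.fplus θ ≤ Fcum A.fminus (θ + A.τ + s₀) := by
    by_contra hcon
    push_neg at hcon
    have hlb : ∀ u ∈ Set.Icc (θ + A.τ) (θ + A.τ + s₀), A.ε ≤ A.fminus u := by
      intro u hu
      apply A.outflow_lb
      have h1 : Fcum A.fminus u ≤ Fcum A.fminus (θ + A.τ + s₀) :=
        Fcum_mono A.fminus_li A.fminus_nonneg hu.2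
      have h2 : Fcum A.fplus θ ≤ Fcum A.fplus (u - A.τ) :=
        Fcum_mono A.fplus_li A.fplus_nonneg (by linarith [hu.1])
      show 0 < Fcum A.fplus (u - A.τ) - Fcum A.fminus u
      linarith
    have hint : A.ε * s₀ ≤ Fcum A.fminus (θ + A.τ + s₀) - Fcum A.fminus (θ + A.τ) := by
      rw [Fcum_sub A.fminus_li]
      calc A.ε * s₀ = ∫ _x in (θ + A.τ)..(θ + A.τ + s₀), A.ε := by
            simp
            ring
        _ ≤ ∫ x in (θ + A.τ)..(θ + A.τ + s₀), A.fminus x := by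
            apply intervalIntegral.integral_mono_on (by linarith) intervalIntegrable_const
              (ii A.fminus_li _ _) hlb
    have heq : A.ε * s₀ = z + A.ε := by rw [hs₀]; field_simp
    linarith
  have hcontF : ContinuousOn (fun s => Fcum A.fminus (θ + A.τ + s)) (Set.Icc 0 s₀) :=
    ((Fcum_continuous A.fminus_li).comp (by continuity)).continuousOn
  have h0 : Fcum A.fminus (θ + A.τ + 0) ≤ Fcum A.fplus θ := by
    rw [add_zero]; linarith
  obtain ⟨s, hs, hval⟩ := intermediate_value_Icc hs₀pos.le hcontF ⟨h0, key⟩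
  exact ⟨s, hs.1, hval⟩

lemma Arc.q_spec (θ : ℝ) (hz : 0 ≤ A.z (θ + A.τ)) : A.q θ ∈ A.Sset θ := by
  rw [A.q_def']
  apply IsClosed.csInf_mem ?_ (A.Sset_nonempty θ hz) ⟨0, fun u hu => hu.1⟩
  have : A.Sset θ = Set.Ici 0 ∩ (fun s => Fcum A.fminus (θ + A.τ + s)) ⁻¹' {Fcum A.fplus θ} := by
    ext s; rfl
  rw [this]
  exact isClosed_Ici.inter (isClosed_singleton.preimage (by
    exact (Fcum_continuous A.fminus_li).comp (by continuity)))

lemma Arc.z_nonneg' (θ : ℝ) (hθ : 0 ≤ θ) : 0 ≤ A.z (θ + A.τ) :=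
  A.queue_nonneg (θ + A.τ) (by linarith [A.τ_nonneg])

lemma Arc.FmT (θ : ℝ) (hθ : 0 ≤ θ) :
    Fcum A.fminus (A.T θ) = Fcum A.fplus θ :=
  (A.q_spec θ (A.z_nonneg' θ hθ)).2

lemma Arc.q_zero_of_nonpos {θ : ℝ} (hθ : θ ≤ 0) : A.q θ = 0 := by
  have hFp : Fcum A.fplus θ = 0 := Fcum_of_nonpos A.fplus_li A.fplus_zero_neg hθ
  have hFm : 0 ≤ Fcum A.fminus (θ + A.τ) :=
    Fcum_nonneg A.fminus_li A.fminus_nonneg A.fminus_zero_neg _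
  rcases eq_or_lt_of_le hFm with heq | hlt
  · refine le_antisymm (A.q_min θ (le_refl 0) ?_) (A.q_nonneg θ)
    rw [add_zero, ← heq, hFp]
  · have hempty : A.Sset θ = ∅ := by
      ext s
      simp only [Arc.Sset, Set.mem_setOf_eq, Set.mem_empty_iff_false, iff_false, not_and]
      intro hs
      have : Fcum A.fminus (θ + A.τ) ≤ Fcum A.fminus (θ + A.τ + s) :=
        Fcum_mono A.fminus_li A.fminus_nonneg (by linarith)
      rw [hFp]
      linarith
    rw [A.q_def', hempty, Real.sInf_empty]

lemma Arc.Fm_lt (θ : ℝ) (hθ : 0 ≤ θ) {t : ℝ} (h1 : θ + A.τ ≤ t) (h2 : t < A.T θ) :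
    Fcum A.fminus t < Fcum A.fplus θ := by
  have hle : Fcum A.fminus t ≤ Fcum A.fplus θ := by
    rw [← A.FmT θ hθ]
    exact Fcum_mono A.fminus_li A.fminus_nonneg h2.le
  rcases lt_or_eq_of_le hle with h | h
  · exact h
  · exfalso
    have := A.q_min θ (s := t - (θ + A.τ)) (by linarith)
      (by rw [show θ + A.τ + (t - (θ + A.τ)) = t by ring]; exact h)
    have hT : A.T θ = θ + A.τ + A.q θ := by unfold Arc.T; ring
    linarith [hT ▸ h2]

lemma Arc.T_mono (a b : ℝ) (ha : 0 ≤ a) (hab : a ≤ b) : A.T a ≤ A.T b := by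
  by_contra hcon
  push_neg at hcon
  have hb : 0 ≤ b := ha.trans hab
  have h1 : Fcum A.fminus (A.T b) = Fcum A.fplus b := A.FmT b hb
  have h2 : Fcum A.fplus a ≤ Fcum A.fplus b := Fcum_mono A.fplus_li A.fplus_nonneg hab
  have h3 : Fcum A.fminus (A.T b) ≤ Fcum A.fplus a := by
    rw [← A.FmT a ha]
    exact Fcum_mono A.fminus_li A.fminus_nonneg hcon.le
  have h4 : Fcum A.fminus (A.T b) = Fcum A.fplus a := le_antisymm h3 (by linarith)
  have h5 := A.q_min a (s := A.T b - (a + A.τ))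
    (by unfold Arc.T; linarith [A.q_nonneg b])
    (by rw [show a + A.τ + (A.T b - (a + A.τ)) = A.T b by ring]; exact h4)
  unfold Arc.T at *
  linarith

lemma Arc.T_ub (a b : ℝ) (ha : 0 ≤ a) (hab : a ≤ b) :
    A.T b ≤ max (A.T a) (b + A.τ) + (Fcum A.fplus b - Fcum A.fplus a) / A.ε := by
  set m := max (A.T a) (b + A.τ) with hm
  have hε := A.ε_pos
  have hFp : 0 ≤ Fcum A.fplus b - Fcum A.fplus a :=
    sub_nonneg.2 (Fcum_mono A.fplus_li A.fplus_nonneg hab)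
  rcases le_or_gt (A.T b) m with h | h
  · have : 0 ≤ (Fcum A.fplus b - Fcum A.fplus a) / A.ε := by positivity
    linarith
  · have hb : 0 ≤ b := ha.trans hab
    have hlb : ∀ t ∈ Set.Ioo m (A.T b), A.ε ≤ A.fminus t := by
      intro t ht
      have ht1 : b + A.τ ≤ t := le_of_lt (lt_of_le_of_lt (le_max_right _ _) ht.1)
      have hlt : Fcum A.fminus t < Fcum A.fplus b := A.Fm_lt b hb (by linarith) ht.2
      apply A.outflow_lb
      show 0 < Fcum A.fplus (t - A.τ) - Fcum A.fminus t
      have : Fcum A.fplus b ≤ Fcum A.fplus (t - A.τ) :=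
        Fcum_mono A.fplus_li A.fplus_nonneg (by linarith)
      linarith
    have hint : A.ε * (A.T b - m) ≤ Fcum A.fminus (A.T b) - Fcum A.fminus m := by
      rw [Fcum_sub A.fminus_li m (A.T b), intervalIntegral.integral_of_le h.le,
        MeasureTheory.integral_Ioc_eq_integral_Ioo]
      have hconst : ∫ _t in Set.Ioo m (A.T b), A.ε = A.ε * (A.T b - m) := by
        rw [MeasureTheory.setIntegral_const]
        simp [Real.volume_Ioo, ENNReal.toReal_ofReal (by linarith : (0:ℝ) ≤ A.T b - m)]
        rw [max_eq_left (by linarith)]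
        ring
      rw [← hconst]
      apply MeasureTheory.setIntegral_mono_on
      · exact integrableOn_const (by rw [Real.volume_Ioo]; exact ENNReal.ofReal_ne_top)
      · have := (ii A.fminus_li m (A.T b))
        rw [intervalIntegrable_iff] at this
        exact this.mono_set (by rw [Set.uIoc_of_le h.le]; exact Set.Ioo_subset_Ioc_self)
      · exact measurableSet_Ioo
      · exact hlb
    have hFm : Fcum A.fminus (A.T a) ≤ Fcum A.fminus m :=
      Fcum_mono A.fminus_li A.fminus_nonneg (le_max_left _ _)
    have h6 : A.ε * (A.T b - m) ≤ Fcum A.fplus b - Fcum A.fplus a := by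
      have := A.FmT b hb
      have := A.FmT a ha
      linarith
    have h7 : A.T b - m ≤ (Fcum A.fplus b - Fcum A.fplus a) / A.ε := by
      rw [le_div_iff₀ hε]
      linarith
    linarith

lemma Arc.q_lipschitz {νplus : ℝ} (hνε : A.ε ≤ νplus) (hcap : ∀ θ, A.fplus θ ≤ νplus) :
    LipschitzWith (Real.toNNReal (νplus / A.ε)) A.q := by
  have hε := A.ε_pos
  set K := νplus / A.ε with hK
  have hK1 : 1 ≤ K := (one_le_div hε).2 hνε
  have main : ∀ a b, 0 ≤ a → a ≤ b → |A.q b - A.q a| ≤ K * (b - a) := by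
    intro a b ha hab
    have hub : A.q b ≤ A.q a + K * (b - a) := by
      have h1 := A.T_ub a b ha hab
      have h2 : max (A.T a) (b + A.τ) ≤ A.q a + b + A.τ := by
        apply max_le
        · show a + A.τ + A.q a ≤ _
          linarith
        · linarith [A.q_nonneg a]
      have h3 : Fcum A.fplus b - Fcum A.fplus a ≤ νplus * (b - a) :=
        Fcum_le A.fplus_li hcap hab
      have h4 : (Fcum A.fplus b - Fcum A.fplus a) / A.ε ≤ νplus * (b - a) / A.ε := by
        gcongr
      have h5 : νplus * (b - a) / A.ε = K * (b - a) := by rw [hK]; ring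
      have h6 : A.T b = b + A.τ + A.q b := rfl
      linarith
    have hlb : A.q a - A.q b ≤ b - a := by
      have h := A.T_mono a b ha hab
      have h6 : A.T b = b + A.τ + A.q b := rfl
      have h7 : A.T a = a + A.τ + A.q a := rfl
      linarith
    rw [abs_le]
    constructor
    · nlinarith
    · linarith
  have claim : ∀ a b, a ≤ b → |A.q b - A.q a| ≤ K * (b - a) := by
    intro a b hab
    rcases le_or_gt 0 a with ha | ha
    · exact main a b ha hab
    · have hqa : A.q a = 0 := A.q_zero_of_nonpos ha.le
      rcases le_or_gt b 0 with hb | hb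
      · have hqb : A.q b = 0 := A.q_zero_of_nonpos hb
        rw [hqa, hqb]
        simp only [sub_self, abs_zero]
        nlinarith
      · have h0 := main 0 b (le_refl 0) hb.le
        rw [A.q_zero_of_nonpos (le_refl 0)] at h0
        rw [hqa]
        have h2 : K * (b - 0) ≤ K * (b - a) := by nlinarith
        linarith
  apply LipschitzWith.of_dist_le_mul
  intro x y
  have hK0 : (0:ℝ) ≤ K := by linarith
  rw [Real.dist_eq, Real.dist_eq, Real.coe_toNNReal _ hK0]
  rcases le_total x y with h | h
  · calc |A.q x - A.q y| = |A.q y - A.q x| := abs_sub_comm _ _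
      _ ≤ K * (y - x) := claim x y h
      _ = K * |x - y| := by rw [abs_sub_comm, abs_of_nonneg (by linarith)]
  · calc |A.q x - A.q y| ≤ K * (x - y) := claim y x h
      _ = K * |x - y| := by rw [abs_of_nonneg (by linarith)]

end ArcLemmas

/-- **Derivative of the waiting time.** For a single arc of a feasible flow over
time whose inflow rate is bounded by `ν⁺ ≥ ε` (so that `q` is Lipschitz and hence
differentiable almost everywhere), for almost all `θ ≥ 0` the waiting time has
derivative `f⁺(θ)/f⁻(T(θ)) − 1` if `f⁻(T(θ)) > 0`, derivative `−1` if
`f⁻(T(θ)) = 0` and `z(θ + τ) > 0`, and derivative `0` otherwise. -/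
theorem arc_wait_deriv (A : Arc) (νplus : ℝ)
    (hνε : A.ε ≤ νplus) (hcap : ∀ θ, A.fplus θ ≤ νplus) :
    ∀ᵐ θ ∂(volume : Measure ℝ), 0 ≤ θ →
      HasDerivAt A.q
        (if 0 < A.fminus (A.T θ) then A.fplus θ / A.fminus (A.T θ) - 1
         else if 0 < A.z (θ + A.τ) then -1 else 0) θ := by
  classical
  have hε := A.ε_pos
  have hKq := A.q_lipschitz hνε hcap
  have hTmono : MonotoneOn A.T (Set.Ici 0) := fun a ha _b _hb hab => A.T_mono a _ ha hab
  have hTcont : Continuous A.T := by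
    have : A.T = fun θ => θ + A.τ + A.q θ := rfl
    rw [this]
    exact (continuous_id.add continuous_const).add hKq.continuous
  set N : Set ℝ := {t | ¬ HasDerivAt (Fcum A.fminus) (A.fminus t) t} with hNdef
  have hN : volume N = 0 := by
    have h := Aux.ftc_ae A.fminus_li A.fminus_nonneg
    rw [MeasureTheory.ae_iff] at h
    exact h
  filter_upwards [hKq.ae_differentiableAt_of_real (μ := volume),
    Aux.ftc_ae A.fplus_li A.fplus_nonneg,
    Aux.sard hTcont hTmono hN,
    compl_mem_ae_iff.2 (measure_singleton (0:ℝ))] with θ hdiff hFp hsard hne0 hθge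
  have hθ : 0 < θ := lt_of_le_of_ne hθge (fun h => hne0 h.symm)
  set d := deriv A.q θ with hd'
  have hd : HasDerivAt A.q d θ := hdiff.hasDerivAt
  have hT : HasDerivAt A.T (1 + d) θ := by
    have h : A.T = fun x => x + A.τ + A.q x := rfl
    rw [h]
    exact ((hasDerivAt_id θ).add_const A.τ).add hd
  set m := A.fminus (A.T θ) with hm'
  have hFpT : (Fcum A.fplus) =ᶠ[nhds θ] fun x => Fcum A.fminus (A.T x) := by
    filter_upwards [eventually_gt_nhds hθ] with x hx
    exact (A.FmT x hx.le).symm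
  suffices hval :
      (if 0 < m then A.fplus θ / m - 1 else if 0 < A.z (θ + A.τ) then -1 else 0) = d by
    rw [hval]
    exact hd
  by_cases hm : 0 < m
  · rw [if_pos hm]
    by_cases hTN : A.T θ ∈ N
    · have hder0 : deriv A.T θ = 0 := hsard hθ hT.differentiableAt hTN
      have h1d : 1 + d = 0 := by rw [← hT.deriv]; exact hder0
      have hT0 : HasDerivAt A.T 0 θ := h1d ▸ hT
      have hcomp : HasDerivAt (fun x => Fcum A.fminus (A.T x)) 0 θ :=
        Aux.lipschitz_comp_zero
          (Aux.Fcum_lipschitz A.fminus_li A.fminus_nonneg A.fminus_le_cap) hT0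
      have hFp0 : HasDerivAt (Fcum A.fplus) 0 θ := hcomp.congr_of_eventuallyEq hFpT
      have hfp0 : A.fplus θ = 0 := hFp.unique hFp0
      rw [hfp0, zero_div]
      linarith
    · have hFm : HasDerivAt (Fcum A.fminus) m (A.T θ) := not_not.1 hTN
      have hcomp : HasDerivAt (fun x => Fcum A.fminus (A.T x)) (m * (1 + d)) θ :=
        hFm.comp θ hT
      have hFp' : HasDerivAt (Fcum A.fplus) (m * (1 + d)) θ :=
        hcomp.congr_of_eventuallyEq hFpT
      have heq : A.fplus θ = m * (1 + d) := hFp.unique hFp'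
      rw [heq]
      field_simp
      ring
  · have hm0 : m = 0 := le_antisymm (not_lt.1 hm) (A.fminus_nonneg _)
    rw [if_neg hm]
    by_cases hz : 0 < A.z (θ + A.τ)
    · rw [if_pos hz]
      have hzθ : 0 ≤ A.z (θ + A.τ) := hz.le
      have hq0 : 0 < A.q θ := by
        rcases lt_or_eq_of_le (A.q_nonneg θ) with h | h
        · exact h
        · exfalso
          have hspec := (A.q_spec θ hzθ).2
          rw [← h, add_zero] at hspec
          have := A.z_eq θ
          linarith
      have hTθ0 : 0 ≤ A.T θ := by
        have : A.T θ = θ + A.τ + A.q θ := rfl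
        linarith [A.τ_nonneg]
      have hzT : A.z (A.T θ) = 0 := by
        refine le_antisymm ?_ (A.queue_nonneg _ hTθ0)
        by_contra hcon
        push_neg at hcon
        have := A.outflow_lb _ hcon
        rw [← hm'] at this
        linarith
      have hTsub : A.T θ - A.τ = θ + A.q θ := by
        have : A.T θ = θ + A.τ + A.q θ := rfl
        linarith
      have hFpconst : Fcum A.fplus (θ + A.q θ) = Fcum A.fplus θ := by
        have h1 : A.z (A.T θ) = Fcum A.fplus (A.T θ - A.τ) - Fcum A.fminus (A.T θ) := rfl
        rw [hTsub, A.FmT θ hθ.le] at h1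
        rw [h1] at hzT
        linarith
      have hqaff : ∀ x ∈ Set.Icc θ (θ + A.q θ), A.q x = A.T θ - A.τ - x := by
        intro x hx
        have hx0 : 0 ≤ x := hθ.le.trans hx.1
        have hFpx : Fcum A.fplus x = Fcum A.fplus θ := by
          refine le_antisymm ?_ (Aux.Fcum_mono A.fplus_li A.fplus_nonneg hx.1)
          rw [← hFpconst]
          exact Aux.Fcum_mono A.fplus_li A.fplus_nonneg hx.2
        refine le_antisymm ?_ ?_
        · apply A.q_min x (by rw [hTsub]; linarith [hx.2])
          rw [show x + A.τ + (A.T θ - A.τ - x) = A.T θ by ring, A.FmT θ hθ.le, hFpx]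
        · by_contra hcon
          push_neg at hcon
          have hqx := (A.q_spec x (A.z_nonneg' x hx0)).2
          rw [hFpx] at hqx
          have hlt := A.Fm_lt θ hθ.le (t := x + A.τ + A.q x)
            (by linarith [hx.1, A.q_nonneg x]) (by linarith)
          linarith
      have hud : UniqueDiffWithinAt ℝ (Set.Icc θ (θ + A.q θ)) θ :=
        uniqueDiffOn_Icc (by linarith) θ ⟨le_refl _, by linarith⟩
      have h1 : HasDerivWithinAt A.q d (Set.Icc θ (θ + A.q θ)) θ := hd.hasDerivWithinAt
      have h2 : HasDerivWithinAt A.q (-1) (Set.Icc θ (θ + A.q θ)) θ := by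
        have haff : HasDerivWithinAt (fun x => A.T θ - A.τ - x) (-1)
            (Set.Icc θ (θ + A.q θ)) θ := by
          simpa using ((hasDerivAt_id θ).const_sub (A.T θ - A.τ)).hasDerivWithinAt
        exact haff.congr (fun x hx => hqaff x hx) (hqaff θ ⟨le_refl _, by linarith⟩)
      have he := h1.derivWithin hud
      rw [h2.derivWithin hud] at he
      exact he
    · rw [if_neg hz]
      have hz0 : A.z (θ + A.τ) = 0 :=
        le_antisymm (not_lt.1 hz) (A.z_nonneg' θ hθ.le)
      have hq0 : A.q θ = 0 := by
        refine le_antisymm (A.q_min θ (le_refl 0) ?_) (A.q_nonneg θ)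
        have := A.z_eq θ
        rw [add_zero]
        linarith
      have hmin : IsLocalMin A.q θ :=
        Filter.Eventually.of_forall (fun x => by rw [hq0]; exact A.q_nonneg x)
      exact (hmin.hasDerivAt_eq_zero hd).symm
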